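/- For arbitrary real 3×3 matrices f₊₊, f₊₋, f₋₊, f₋₋, the signature-density contraction of the tensor R_{abcd} satisfies Σ_{a,b,e,f,g,h=1}^{4} ε_{efgh} R_{abef} R_{abgh} = 32 ( ‖f₊₊‖² + ‖f₋₊‖² − ‖f₊₋‖² − ‖f₋₋‖² ), where ε is the four-index Levi-Civita symbol with ε_{1234} = 1 and ‖f‖² = Σ_{i,j} (f^{ij})² denotes the squared Frobenius norm. In particular, if f₊₋ equals the transpose of f₋₊, the right-hand side equals 32 ( ‖f₊₊‖² − ‖f₋₋‖² ). -/

import Mathlib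

noncomputable section

open Matrix

/-- Three-index Levi-Civita symbol on `Fin 3` (ε₁₂₃ = 1, zero-indexed as ε₀₁₂ = 1). -/
def eps3 (i j k : Fin 3) : ℝ :=
  ((j : ℝ) - (i : ℝ)) * ((k : ℝ) - (i : ℝ)) * ((k : ℝ) - (j : ℝ)) / 2

/-- Four-index Levi-Civita symbol on `Fin 4` (ε₁₂₃₄ = 1, zero-indexed as ε₀₁₂₃ = 1). -/
def eps4 (a b c d : Fin 4) : ℝ :=
  ((b : ℝ) - (a : ℝ)) * ((c : ℝ) - (a : ℝ)) * ((d : ℝ) - (a : ℝ)) *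
    ((c : ℝ) - (b : ℝ)) * ((d : ℝ) - (b : ℝ)) * ((d : ℝ) - (c : ℝ)) / 12

/-- 't Hooft symbol η^i_{ab}: η^i_{jk} = ε_{ijk}, η^i_{j4} = δ_{ij}, η^i_{4j} = -δ_{ij},
η^i_{44} = 0 (the index `4` of the paper is the index `3 : Fin 4` here). -/
def tHooft (i : Fin 3) (a b : Fin 4) : ℝ :=
  if ha : (a : ℕ) < 3 then
    if hb : (b : ℕ) < 3 then eps3 i ⟨a, ha⟩ ⟨b, hb⟩
    else if (a : ℕ) = (i : ℕ) then 1 else 0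
  else
    if (b : ℕ) < 3 then (if (b : ℕ) = (i : ℕ) then -1 else 0)
    else 0

/-- 't Hooft symbol η̄^i_{ab}: η̄^i_{jk} = ε_{ijk}, η̄^i_{j4} = -δ_{ij}, η̄^i_{4j} = δ_{ij},
η̄^i_{44} = 0. -/
def tHooftBar (i : Fin 3) (a b : Fin 4) : ℝ :=
  if ha : (a : ℕ) < 3 then
    if hb : (b : ℕ) < 3 then eps3 i ⟨a, ha⟩ ⟨b, hb⟩
    else if (a : ℕ) = (i : ℕ) then -1 else 0
  else
    if (b : ℕ) < 3 then (if (b : ℕ) = (i : ℕ) then 1 else 0)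
    else 0

/-- The curvature-type tensor built from 3×3 matrices f₊₊, f₊₋, f₋₊, f₋₋ via the
't Hooft symbols. -/
def Riem (fpp fpm fmp fmm : Matrix (Fin 3) (Fin 3) ℝ) (a b c d : Fin 4) : ℝ :=
  ∑ i : Fin 3, ∑ j : Fin 3,
    (fpp i j * tHooft i a b * tHooft j c d
      + fpm i j * tHooft i a b * tHooftBar j c d
      + fmp i j * tHooftBar i a b * tHooft j c d
      + fmm i j * tHooftBar i a b * tHooftBar j c d)

lemma ortho_pp (i k : Fin 3) :
    (∑ a : Fin 4, ∑ b : Fin 4, tHooft i a b * tHooft k a b) = if i = k then 4 else 0 := by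
  fin_cases i <;> fin_cases k <;> simp only [Fin.sum_univ_four] <;>
    norm_num [tHooft, eps3, Fin.sum_univ_four, Fin.ext_iff,
      show ((0:Fin 4):ℕ)=0 from rfl, show ((1:Fin 4):ℕ)=1 from rfl,
      show ((2:Fin 4):ℕ)=2 from rfl, show ((3:Fin 4):ℕ)=3 from rfl]

lemma ortho_mm (i k : Fin 3) :
    (∑ a : Fin 4, ∑ b : Fin 4, tHooftBar i a b * tHooftBar k a b) = if i = k then 4 else 0 := by
  fin_cases i <;> fin_cases k <;> simp only [Fin.sum_univ_four] <;>
    norm_num [tHooftBar, eps3, Fin.sum_univ_four, Fin.ext_iff,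
      show ((0:Fin 4):ℕ)=0 from rfl, show ((1:Fin 4):ℕ)=1 from rfl,
      show ((2:Fin 4):ℕ)=2 from rfl, show ((3:Fin 4):ℕ)=3 from rfl]

lemma ortho_pm (i k : Fin 3) :
    (∑ a : Fin 4, ∑ b : Fin 4, tHooft i a b * tHooftBar k a b) = 0 := by
  fin_cases i <;> fin_cases k <;> simp only [Fin.sum_univ_four] <;>
    norm_num [tHooft, tHooftBar, eps3, Fin.sum_univ_four, Fin.ext_iff,
      show ((0:Fin 4):ℕ)=0 from rfl, show ((1:Fin 4):ℕ)=1 from rfl,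
      show ((2:Fin 4):ℕ)=2 from rfl, show ((3:Fin 4):ℕ)=3 from rfl]

set_option maxHeartbeats 4000000 in
lemma dual_eta (j : Fin 3) (e f : Fin 4) :
    (∑ g : Fin 4, ∑ h : Fin 4, eps4 e f g h * tHooft j g h) = 2 * tHooft j e f := by
  fin_cases j <;> fin_cases e <;> fin_cases f <;> simp only [Fin.sum_univ_four] <;>
    norm_num [tHooft, eps3, eps4, Fin.sum_univ_four, Fin.ext_iff,
      show ((0:Fin 4):ℕ)=0 from rfl, show ((1:Fin 4):ℕ)=1 from rfl,
      show ((2:Fin 4):ℕ)=2 from rfl, show ((3:Fin 4):ℕ)=3 from rfl]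

set_option maxHeartbeats 4000000 in
lemma dual_etaBar (j : Fin 3) (e f : Fin 4) :
    (∑ g : Fin 4, ∑ h : Fin 4, eps4 e f g h * tHooftBar j g h) = -2 * tHooftBar j e f := by
  fin_cases j <;> fin_cases e <;> fin_cases f <;> simp only [Fin.sum_univ_four] <;>
    norm_num [tHooftBar, eps3, eps4, Fin.sum_univ_four, Fin.ext_iff,
      show ((0:Fin 4):ℕ)=0 from rfl, show ((1:Fin 4):ℕ)=1 from rfl,
      show ((2:Fin 4):ℕ)=2 from rfl, show ((3:Fin 4):ℕ)=3 from rfl]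

/-- reorder a quadruple sum -/
lemma sum4_comm {M : Type*} [AddCommMonoid M] {α β γ δ : Type*} [Fintype α] [Fintype β]
    [Fintype γ] [Fintype δ] (f : α → β → γ → δ → M) :
    (∑ a, ∑ b, ∑ c, ∑ d, f a b c d) = ∑ c, ∑ d, ∑ a, ∑ b, f a b c d := by
  calc (∑ a, ∑ b, ∑ c, ∑ d, f a b c d)
      = ∑ a, ∑ c, ∑ b, ∑ d, f a b c d :=
        Finset.sum_congr rfl fun a _ => by rw [Finset.sum_comm]
    _ = ∑ c, ∑ a, ∑ b, ∑ d, f a b c d := by rw [Finset.sum_comm]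
    _ = ∑ c, ∑ a, ∑ d, ∑ b, f a b c d :=
        Finset.sum_congr rfl fun c _ => Finset.sum_congr rfl fun a _ => by rw [Finset.sum_comm]
    _ = ∑ c, ∑ d, ∑ a, ∑ b, f a b c d :=
        Finset.sum_congr rfl fun c _ => by rw [Finset.sum_comm]

/-- generic orthogonality expansion -/
lemma pair_sum (A B A' B' : Fin 3 → ℝ) :
    (∑ a : Fin 4, ∑ b : Fin 4,
      (∑ i : Fin 3, (A i * tHooft i a b + B i * tHooftBar i a b)) *
      (∑ k : Fin 3, (A' k * tHooft k a b + B' k * tHooftBar k a b)))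
    = 4 * ∑ i : Fin 3, (A i * A' i + B i * B' i) := by
  have key : ∀ a b : Fin 4,
      (∑ i : Fin 3, (A i * tHooft i a b + B i * tHooftBar i a b)) *
      (∑ k : Fin 3, (A' k * tHooft k a b + B' k * tHooftBar k a b))
      = ∑ i : Fin 3, ∑ k : Fin 3,
          (A i * A' k * (tHooft i a b * tHooft k a b)
           + A i * B' k * (tHooft i a b * tHooftBar k a b)
           + B i * A' k * (tHooft k a b * tHooftBar i a b)
           + B i * B' k * (tHooftBar i a b * tHooftBar k a b)) := by
    intro a b
    rw [Finset.sum_mul_sum]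
    exact Finset.sum_congr rfl fun i _ => Finset.sum_congr rfl fun k _ => by ring
  calc (∑ a : Fin 4, ∑ b : Fin 4,
      (∑ i : Fin 3, (A i * tHooft i a b + B i * tHooftBar i a b)) *
      (∑ k : Fin 3, (A' k * tHooft k a b + B' k * tHooftBar k a b)))
      = ∑ a : Fin 4, ∑ b : Fin 4, ∑ i : Fin 3, ∑ k : Fin 3,
          (A i * A' k * (tHooft i a b * tHooft k a b)
           + A i * B' k * (tHooft i a b * tHooftBar k a b)
           + B i * A' k * (tHooft k a b * tHooftBar i a b)
           + B i * B' k * (tHooftBar i a b * tHooftBar k a b)) := by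
        exact Finset.sum_congr rfl fun a _ => Finset.sum_congr rfl fun b _ => key a b
    _ = ∑ i : Fin 3, ∑ k : Fin 3, ∑ a : Fin 4, ∑ b : Fin 4,
          (A i * A' k * (tHooft i a b * tHooft k a b)
           + A i * B' k * (tHooft i a b * tHooftBar k a b)
           + B i * A' k * (tHooft k a b * tHooftBar i a b)
           + B i * B' k * (tHooftBar i a b * tHooftBar k a b)) := sum4_comm _
    _ = ∑ i : Fin 3, ∑ k : Fin 3,
          (A i * A' k * (if i = k then (4:ℝ) else 0)
           + A i * B' k * 0 + B i * A' k * 0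
           + B i * B' k * (if i = k then (4:ℝ) else 0)) := by
        refine Finset.sum_congr rfl fun i _ => Finset.sum_congr rfl fun k _ => ?_
        simp only [Finset.sum_add_distrib, ← Finset.mul_sum, ortho_pp, ortho_mm, ortho_pm]
    _ = 4 * ∑ i : Fin 3, (A i * A' i + B i * B' i) := by
        rw [Finset.mul_sum]
        refine Finset.sum_congr rfl fun i _ => ?_
        rw [Finset.sum_eq_single i (by intro k _ hk; simp [Ne.symm hk]) (by simp)]
        simp; ring

lemma sum2_add {M : Type*} [AddCommMonoid M] {α β : Type*} [Fintype α] [Fintype β]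
    (f g : α → β → M) :
    (∑ a, ∑ b, (f a b + g a b)) = (∑ a, ∑ b, f a b) + (∑ a, ∑ b, g a b) := by
  simp [Finset.sum_add_distrib]

/-- Riem in nested form -/
lemma Riem_eq (G1 G2 G3 G4 : Matrix (Fin 3) (Fin 3) ℝ) (a b e f : Fin 4) :
    Riem G1 G2 G3 G4 a b e f
    = ∑ i : Fin 3,
        ((∑ j : Fin 3, (G1 i j * tHooft j e f + G2 i j * tHooftBar j e f)) * tHooft i a b
         + (∑ j : Fin 3, (G3 i j * tHooft j e f + G4 i j * tHooftBar j e f)) * tHooftBar i a b) := by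
  unfold Riem
  refine Finset.sum_congr rfl fun i _ => ?_
  rw [Finset.sum_mul, Finset.sum_mul, ← Finset.sum_add_distrib]
  exact Finset.sum_congr rfl fun j _ => by ring


lemma sum3_comm {M : Type*} [AddCommMonoid M] {α β γ : Type*} [Fintype α] [Fintype β]
    [Fintype γ] (f : α → β → γ → M) :
    (∑ a, ∑ b, ∑ c, f a b c) = ∑ c, ∑ a, ∑ b, f a b c := by
  calc (∑ a, ∑ b, ∑ c, f a b c)
      = ∑ a, ∑ c, ∑ b, f a b c := Finset.sum_congr rfl fun a _ => by rw [Finset.sum_comm]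
    _ = ∑ c, ∑ a, ∑ b, f a b c := by rw [Finset.sum_comm]

/-- epsilon contraction of Riem gives twice the "flipped" Riem -/
lemma dual_Riem (G1 G2 G3 G4 : Matrix (Fin 3) (Fin 3) ℝ) (a b e f : Fin 4) :
    (∑ g : Fin 4, ∑ h : Fin 4, eps4 e f g h * Riem G1 G2 G3 G4 a b g h)
    = 2 * Riem G1 (-G2) G3 (-G4) a b e f := by
  calc (∑ g : Fin 4, ∑ h : Fin 4, eps4 e f g h * Riem G1 G2 G3 G4 a b g h)
      = ∑ g : Fin 4, ∑ h : Fin 4, ∑ i : Fin 3,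
          (eps4 e f g h *
            ((∑ j : Fin 3, (G1 i j * tHooft j g h + G2 i j * tHooftBar j g h)) * tHooft i a b
             + (∑ j : Fin 3, (G3 i j * tHooft j g h + G4 i j * tHooftBar j g h)) * tHooftBar i a b)) := by
        refine Finset.sum_congr rfl fun g _ => Finset.sum_congr rfl fun h _ => ?_
        rw [Riem_eq, Finset.mul_sum]
    _ = ∑ i : Fin 3, ∑ g : Fin 4, ∑ h : Fin 4,
          (eps4 e f g h *
            ((∑ j : Fin 3, (G1 i j * tHooft j g h + G2 i j * tHooftBar j g h)) * tHooft i a b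
             + (∑ j : Fin 3, (G3 i j * tHooft j g h + G4 i j * tHooftBar j g h)) * tHooftBar i a b)) :=
        sum3_comm _
    _ = 2 * Riem G1 (-G2) G3 (-G4) a b e f := by
        rw [Riem_eq, Finset.mul_sum]
        refine Finset.sum_congr rfl fun i _ => ?_
        calc (∑ g : Fin 4, ∑ h : Fin 4,
              (eps4 e f g h *
                ((∑ j : Fin 3, (G1 i j * tHooft j g h + G2 i j * tHooftBar j g h)) * tHooft i a b
                 + (∑ j : Fin 3, (G3 i j * tHooft j g h + G4 i j * tHooftBar j g h)) * tHooftBar i a b)))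
            = ∑ g : Fin 4, ∑ h : Fin 4, ∑ j : Fin 3,
                (G1 i j * tHooft i a b * (eps4 e f g h * tHooft j g h)
                 + G2 i j * tHooft i a b * (eps4 e f g h * tHooftBar j g h)
                 + G3 i j * tHooftBar i a b * (eps4 e f g h * tHooft j g h)
                 + G4 i j * tHooftBar i a b * (eps4 e f g h * tHooftBar j g h)) := by
              refine Finset.sum_congr rfl fun g _ => Finset.sum_congr rfl fun h _ => ?_
              rw [Finset.sum_mul, Finset.sum_mul, ← Finset.sum_add_distrib, Finset.mul_sum]
              exact Finset.sum_congr rfl fun j _ => by ring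
          _ = ∑ j : Fin 3, ∑ g : Fin 4, ∑ h : Fin 4,
                (G1 i j * tHooft i a b * (eps4 e f g h * tHooft j g h)
                 + G2 i j * tHooft i a b * (eps4 e f g h * tHooftBar j g h)
                 + G3 i j * tHooftBar i a b * (eps4 e f g h * tHooft j g h)
                 + G4 i j * tHooftBar i a b * (eps4 e f g h * tHooftBar j g h)) := sum3_comm _
          _ = ∑ j : Fin 3,
                (G1 i j * tHooft i a b * (2 * tHooft j e f)
                 + G2 i j * tHooft i a b * (-2 * tHooftBar j e f)
                 + G3 i j * tHooftBar i a b * (2 * tHooft j e f)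
                 + G4 i j * tHooftBar i a b * (-2 * tHooftBar j e f)) := by
              refine Finset.sum_congr rfl fun j _ => ?_
              simp only [Finset.sum_add_distrib, ← Finset.mul_sum, dual_eta, dual_etaBar]
          _ = 2 * ((∑ j : Fin 3, (G1 i j * tHooft j e f + (-G2) i j * tHooftBar j e f)) * tHooft i a b
               + (∑ j : Fin 3, (G3 i j * tHooft j e f + (-G4) i j * tHooftBar j e f)) * tHooftBar i a b) := by
              rw [Finset.sum_mul, Finset.sum_mul, ← Finset.sum_add_distrib, mul_comm,
                Finset.sum_mul]
              refine Finset.sum_congr rfl fun j _ => ?_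
              simp only [Matrix.neg_apply]
              ring

lemma prod_Riem (G1 G2 G3 G4 H1 H2 H3 H4 : Matrix (Fin 3) (Fin 3) ℝ) :
    (∑ a : Fin 4, ∑ b : Fin 4, ∑ e : Fin 4, ∑ f : Fin 4,
      Riem G1 G2 G3 G4 a b e f * Riem H1 H2 H3 H4 a b e f)
    = 16 * ∑ i : Fin 3, ∑ j : Fin 3,
        (G1 i j * H1 i j + G2 i j * H2 i j + G3 i j * H3 i j + G4 i j * H4 i j) := by
  calc (∑ a : Fin 4, ∑ b : Fin 4, ∑ e : Fin 4, ∑ f : Fin 4,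
      Riem G1 G2 G3 G4 a b e f * Riem H1 H2 H3 H4 a b e f)
      = ∑ e : Fin 4, ∑ f : Fin 4, ∑ a : Fin 4, ∑ b : Fin 4,
          Riem G1 G2 G3 G4 a b e f * Riem H1 H2 H3 H4 a b e f := sum4_comm _
    _ = ∑ e : Fin 4, ∑ f : Fin 4, (4 * ∑ i : Fin 3,
          ((∑ j : Fin 3, (G1 i j * tHooft j e f + G2 i j * tHooftBar j e f)) *
            (∑ j : Fin 3, (H1 i j * tHooft j e f + H2 i j * tHooftBar j e f))
           + (∑ j : Fin 3, (G3 i j * tHooft j e f + G4 i j * tHooftBar j e f)) *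
            (∑ j : Fin 3, (H3 i j * tHooft j e f + H4 i j * tHooftBar j e f)))) := by
        refine Finset.sum_congr rfl fun e _ => Finset.sum_congr rfl fun f _ => ?_
        rw [← pair_sum]
        exact Finset.sum_congr rfl fun a _ => Finset.sum_congr rfl fun b _ => by
          rw [Riem_eq, Riem_eq]
    _ = 4 * ∑ i : Fin 3, ∑ e : Fin 4, ∑ f : Fin 4,
          ((∑ j : Fin 3, (G1 i j * tHooft j e f + G2 i j * tHooftBar j e f)) *
            (∑ j : Fin 3, (H1 i j * tHooft j e f + H2 i j * tHooftBar j e f))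
           + (∑ j : Fin 3, (G3 i j * tHooft j e f + G4 i j * tHooftBar j e f)) *
            (∑ j : Fin 3, (H3 i j * tHooft j e f + H4 i j * tHooftBar j e f))) := by
        simp only [← Finset.mul_sum]
        congr 1
        exact sum3_comm _
    _ = 4 * ∑ i : Fin 3,
          ((4 * ∑ j : Fin 3, (G1 i j * H1 i j + G2 i j * H2 i j))
           + (4 * ∑ j : Fin 3, (G3 i j * H3 i j + G4 i j * H4 i j))) := by
        congr 1
        refine Finset.sum_congr rfl fun i _ => ?_
        rw [sum2_add (fun e f => (∑ j : Fin 3, (G1 i j * tHooft j e f + G2 i j * tHooftBar j e f)) *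
            (∑ j : Fin 3, (H1 i j * tHooft j e f + H2 i j * tHooftBar j e f)))
          (fun e f => (∑ j : Fin 3, (G3 i j * tHooft j e f + G4 i j * tHooftBar j e f)) *
            (∑ j : Fin 3, (H3 i j * tHooft j e f + H4 i j * tHooftBar j e f)))]
        congr 1
        · simpa using pair_sum (fun j => G1 i j) (fun j => G2 i j)
            (fun j => H1 i j) (fun j => H2 i j)
        · simpa using pair_sum (fun j => G3 i j) (fun j => G4 i j)
            (fun j => H3 i j) (fun j => H4 i j)
    _ = 16 * ∑ i : Fin 3, ∑ j : Fin 3,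
        (G1 i j * H1 i j + G2 i j * H2 i j + G3 i j * H3 i j + G4 i j * H4 i j) := by
        rw [Finset.mul_sum, Finset.mul_sum]
        refine Finset.sum_congr rfl fun i _ => ?_
        simp only [Finset.mul_sum, ← Finset.sum_add_distrib]
        exact Finset.sum_congr rfl fun j _ => by ring

theorem signature_density_contraction (fpp fpm fmp fmm : Matrix (Fin 3) (Fin 3) ℝ) :
    (∑ a : Fin 4, ∑ b : Fin 4, ∑ e : Fin 4, ∑ f : Fin 4, ∑ g : Fin 4, ∑ h : Fin 4,
      eps4 e f g h * Riem fpp fpm fmp fmm a b e f * Riem fpp fpm fmp fmm a b g h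
    = 32 * ((∑ i : Fin 3, ∑ j : Fin 3, (fpp i j) ^ 2)
        + (∑ i : Fin 3, ∑ j : Fin 3, (fmp i j) ^ 2)
        - (∑ i : Fin 3, ∑ j : Fin 3, (fpm i j) ^ 2)
        - (∑ i : Fin 3, ∑ j : Fin 3, (fmm i j) ^ 2)))
    ∧ (fpm = fmpᵀ →
      ∑ a : Fin 4, ∑ b : Fin 4, ∑ e : Fin 4, ∑ f : Fin 4, ∑ g : Fin 4, ∑ h : Fin 4,
        eps4 e f g h * Riem fpp fpm fmp fmm a b e f * Riem fpp fpm fmp fmm a b g h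
      = 32 * ((∑ i : Fin 3, ∑ j : Fin 3, (fpp i j) ^ 2)
          - (∑ i : Fin 3, ∑ j : Fin 3, (fmm i j) ^ 2))) := by
  have main : (∑ a : Fin 4, ∑ b : Fin 4, ∑ e : Fin 4, ∑ f : Fin 4, ∑ g : Fin 4, ∑ h : Fin 4,
      eps4 e f g h * Riem fpp fpm fmp fmm a b e f * Riem fpp fpm fmp fmm a b g h)
    = 32 * ((∑ i : Fin 3, ∑ j : Fin 3, (fpp i j) ^ 2)
        + (∑ i : Fin 3, ∑ j : Fin 3, (fmp i j) ^ 2)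
        - (∑ i : Fin 3, ∑ j : Fin 3, (fpm i j) ^ 2)
        - (∑ i : Fin 3, ∑ j : Fin 3, (fmm i j) ^ 2)) := by
    calc (∑ a : Fin 4, ∑ b : Fin 4, ∑ e : Fin 4, ∑ f : Fin 4, ∑ g : Fin 4, ∑ h : Fin 4,
        eps4 e f g h * Riem fpp fpm fmp fmm a b e f * Riem fpp fpm fmp fmm a b g h)
        = ∑ a : Fin 4, ∑ b : Fin 4, ∑ e : Fin 4, ∑ f : Fin 4,
            (2 * (Riem fpp fpm fmp fmm a b e f * Riem fpp (-fpm) fmp (-fmm) a b e f)) := by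
          refine Finset.sum_congr rfl fun a _ => Finset.sum_congr rfl fun b _ =>
            Finset.sum_congr rfl fun e _ => Finset.sum_congr rfl fun f _ => ?_
          rw [show (∑ g : Fin 4, ∑ h : Fin 4,
              eps4 e f g h * Riem fpp fpm fmp fmm a b e f * Riem fpp fpm fmp fmm a b g h)
            = Riem fpp fpm fmp fmm a b e f * (∑ g : Fin 4, ∑ h : Fin 4,
                eps4 e f g h * Riem fpp fpm fmp fmm a b g h) from by
              rw [Finset.mul_sum]
              refine Finset.sum_congr rfl fun g _ => ?_
              rw [Finset.mul_sum]
              exact Finset.sum_congr rfl fun h _ => by ring]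
          rw [dual_Riem]
          ring
      _ = 2 * (∑ a : Fin 4, ∑ b : Fin 4, ∑ e : Fin 4, ∑ f : Fin 4,
            Riem fpp fpm fmp fmm a b e f * Riem fpp (-fpm) fmp (-fmm) a b e f) := by
          simp only [← Finset.mul_sum]
      _ = 2 * (16 * ∑ i : Fin 3, ∑ j : Fin 3,
            (fpp i j * fpp i j + fpm i j * (-fpm) i j + fmp i j * fmp i j
              + fmm i j * (-fmm) i j)) := by rw [prod_Riem]
      _ = 32 * ((∑ i : Fin 3, ∑ j : Fin 3, (fpp i j) ^ 2)
          + (∑ i : Fin 3, ∑ j : Fin 3, (fmp i j) ^ 2)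
          - (∑ i : Fin 3, ∑ j : Fin 3, (fpm i j) ^ 2)
          - (∑ i : Fin 3, ∑ j : Fin 3, (fmm i j) ^ 2)) := by
          have hterm : ∀ i j : Fin 3,
              fpp i j * fpp i j + fpm i j * (-fpm) i j + fmp i j * fmp i j
                + fmm i j * (-fmm) i j
              = (fpp i j) ^ 2 + (fmp i j) ^ 2 - (fpm i j) ^ 2 - (fmm i j) ^ 2 := by
            intro i j; simp only [Matrix.neg_apply]; ring
          simp only [hterm, Finset.sum_sub_distrib, Finset.sum_add_distrib]
          ring
  refine ⟨main, fun hT => ?_⟩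
  rw [main]
  have : (∑ i : Fin 3, ∑ j : Fin 3, (fpm i j) ^ 2)
      = ∑ i : Fin 3, ∑ j : Fin 3, (fmp i j) ^ 2 := by
    rw [hT]
    simp only [Matrix.transpose_apply]
    rw [Finset.sum_comm]
  rw [this]
  ring
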